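/- For any r-edge-coloring of K_{m,n} with r ≥ 2 and n ≥ m ≥ 1, there exist two vertices u, v in the class of size n such that the number of common neighbors w with c({u,w}) ≠ c({v,w}) is at most (1 - 1/r)·(1 + 1/(n-1))·m. Equivalently, κ_{r,2}(m,n) ≤ (1 - 1/r)(1 + 1/(n-1))·m, where κ_{r,2}(m,n) is the maximum over r-edge-colorings of the minimum over pairs u,v in the class of size n of the number of alternating paths of length 2 between u and v. -/

import Mathlib

open Finset

/-- For any `r`-edge-coloring of `K_{m,n}` (`r ≥ 2`, `n ≥ m ≥ 1`), there exist two distinct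
vertices `u, v` in the class of size `n` with at most `(1 - 1/r)(1 + 1/(n-1)) m` alternating
paths of length 2 between them. -/
theorem stmt1 (m n r : ℕ) (hr : 2 ≤ r) (hm : 1 ≤ m) (hmn : m ≤ n) (hn : 2 ≤ n)
    (c : Fin n → Fin m → Fin r) :
    ∃ u v : Fin n, u ≠ v ∧
      ((Finset.univ.filter (fun w : Fin m => c u w ≠ c v w)).card : ℚ)
        ≤ (1 - 1 / (r : ℚ)) * (1 + 1 / ((n : ℚ) - 1)) * m := by
  classical
  by_contra hcon
  push_neg at hcon
  set B : ℚ := (1 - 1 / (r : ℚ)) * (1 + 1 / ((n : ℚ) - 1)) * m with hB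
  set D : Fin n → Fin n → ℚ := fun u v =>
    ((Finset.univ.filter (fun w : Fin m => c u w ≠ c v w)).card : ℚ) with hD
  have hrQ : (0:ℚ) < (r:ℚ) := by positivity
  have hrQ2 : (2:ℚ) ≤ (r:ℚ) := by exact_mod_cast hr
  have hnQ : (2:ℚ) ≤ (n:ℚ) := by exact_mod_cast hn
  have hn1 : (0:ℚ) < (n:ℚ) - 1 := by linarith
  -- Per-w bound
  have key : ∀ w : Fin m,
      (∑ u : Fin n, ∑ v : Fin n, (if c u w ≠ c v w then (1:ℚ) else 0))
        ≤ (n:ℚ)^2 * (1 - 1/(r:ℚ)) := by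
    intro w
    set f : Fin r → ℚ := fun i => ((univ.filter (fun u : Fin n => c u w = i)).card : ℚ) with hf
    have hsumf : ∑ i : Fin r, f i = (n:ℚ) := by
      have := Finset.sum_fiberwise (univ : Finset (Fin n)) (fun u => c u w) (fun _ => (1:ℚ))
      simpa [hf] using this
    have hcs : ((n:ℚ))^2 ≤ (r:ℚ) * ∑ i : Fin r, f i ^ 2 := by
      have h := sq_sum_le_card_mul_sum_sq (s := (univ : Finset (Fin r))) (f := f)
      rw [hsumf] at h
      simpa using h
    have hsplit : (∑ u : Fin n, ∑ v : Fin n, (if c u w ≠ c v w then (1:ℚ) else 0))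
        = (n:ℚ)^2 - ∑ i : Fin r, f i ^ 2 := by
      have := Finset.sum_fiberwise (univ : Finset (Fin n)) (fun u => c u w)
        (fun u => ∑ v : Fin n, (if c u w ≠ c v w then (1:ℚ) else 0))
      rw [← this]
      have hinner : ∀ i : Fin r, ∀ u ∈ univ.filter (fun u : Fin n => c u w = i),
          (∑ v : Fin n, (if c u w ≠ c v w then (1:ℚ) else 0)) = (n:ℚ) - f i := by
        intro i u hu
        simp only [mem_filter, mem_univ, true_and] at hu
        have : ∀ v : Fin n, (if c u w ≠ c v w then (1:ℚ) else 0)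
            = 1 - (if c v w = i then (1:ℚ) else 0) := by
          intro v
          subst hu
          rcases eq_or_ne (c v w) (c u w) with h | h
          · simp [h]
          · simp [h, h.symm]
        rw [Finset.sum_congr rfl (fun v _ => this v)]
        rw [Finset.sum_sub_distrib]
        simp [hf, Finset.sum_boole]
      calc ∑ i : Fin r, ∑ u ∈ univ.filter (fun u : Fin n => c u w = i),
              (∑ v : Fin n, (if c u w ≠ c v w then (1:ℚ) else 0))
          = ∑ i : Fin r, f i * ((n:ℚ) - f i) := by
            refine Finset.sum_congr rfl fun i _ => ?_
            rw [Finset.sum_congr rfl (hinner i)]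
            simp [hf, mul_comm]
            ring
        _ = (∑ i : Fin r, f i) * (n:ℚ) - ∑ i : Fin r, f i ^ 2 := by
            rw [Finset.sum_mul, ← Finset.sum_sub_distrib]
            exact Finset.sum_congr rfl fun i _ => by ring
        _ = (n:ℚ)^2 - ∑ i : Fin r, f i ^ 2 := by rw [hsumf]; ring
    rw [hsplit]
    have : (n:ℚ)^2 / (r:ℚ) ≤ ∑ i : Fin r, f i ^ 2 := by
      rw [div_le_iff₀ hrQ]
      linarith [hcs]
    have hexp : (n:ℚ)^2 * (1 - 1/(r:ℚ)) = (n:ℚ)^2 - (n:ℚ)^2 / (r:ℚ) := by ring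
    rw [hexp]
    linarith
  -- Total upper bound
  have hT : (∑ u : Fin n, ∑ v : Fin n, D u v) ≤ (m:ℚ) * (n:ℚ)^2 * (1 - 1/(r:ℚ)) := by
    have hDsum : ∀ u v : Fin n, D u v = ∑ w : Fin m, (if c u w ≠ c v w then (1:ℚ) else 0) := by
      intro u v
      simp only [hD]
      exact (Finset.sum_boole _ _).symm
    calc (∑ u : Fin n, ∑ v : Fin n, D u v)
        = ∑ w : Fin m, ∑ u : Fin n, ∑ v : Fin n, (if c u w ≠ c v w then (1:ℚ) else 0) := by
          simp_rw [hDsum]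
          exact (Finset.sum_congr rfl fun u _ => Finset.sum_comm).trans Finset.sum_comm
      _ ≤ ∑ w : Fin m, (n:ℚ)^2 * (1 - 1/(r:ℚ)) := Finset.sum_le_sum fun w _ => key w
      _ = (m:ℚ) * (n:ℚ)^2 * (1 - 1/(r:ℚ)) := by simp [mul_assoc]
  -- Lower bound from hcon
  have hdiag : ∀ u : Fin n, D u u = 0 := by intro u; simp [hD]
  have hlow : ((n:ℚ)) * ((n:ℚ) - 1) * B < ∑ u : Fin n, ∑ v : Fin n, D u v := by
    have hstep : ∀ u : Fin n, ((n:ℚ) - 1) * B < ∑ v : Fin n, D u v := by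
      intro u
      have herase : ∑ v : Fin n, D u v = ∑ v ∈ univ.erase u, D u v := by
        rw [← Finset.add_sum_erase _ _ (mem_univ u), hdiag, zero_add]
      rw [herase]
      have hne : (univ.erase u).Nonempty := by
        rw [← Finset.card_pos, Finset.card_erase_of_mem (mem_univ u)]
        simp only [Finset.card_univ, Fintype.card_fin]
        omega
      have := Finset.sum_lt_sum_of_nonempty hne
        (f := fun _ => B) (g := fun v => D u v)
        (fun v hv => hcon u v (Ne.symm (Finset.ne_of_mem_erase hv)))
      rw [Finset.sum_const, Finset.card_erase_of_mem (mem_univ u)] at this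
      simpa [Finset.card_univ, Nat.cast_sub (by omega : 1 ≤ n), nsmul_eq_mul] using this
    have : Nonempty (Fin n) := ⟨⟨0, by omega⟩⟩
    have hne' : (univ : Finset (Fin n)).Nonempty := univ_nonempty
    have := Finset.sum_lt_sum_of_nonempty hne'
      (f := fun _ : Fin n => ((n:ℚ) - 1) * B) (g := fun u => ∑ v : Fin n, D u v)
      (fun u _ => hstep u)
    rw [Finset.sum_const, Finset.card_univ, Fintype.card_fin, nsmul_eq_mul] at this
    linarith [this]
  have heq : ((n:ℚ)) * ((n:ℚ) - 1) * B = (m:ℚ) * (n:ℚ)^2 * (1 - 1/(r:ℚ)) := by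
    rw [hB]
    field_simp
    ring
  rw [heq] at hlow
  linarith
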